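/- Suppose p = q. Then, with c̃_n and λ̃_{n+1} defined from the coefficients b̃_{k,n} by c̃_1 = −b̃_{0,1}/b̃_{1,1}, c̃_{n+1} = b̃_{n−1,n}/b̃_{n,n} − b̃_{n,n+1}/b̃_{n+1,n+1} and λ̃_{n+1} = (b̃_{n−1,n−1}/b̃_{n,n})², one has for all n ≥ 1: c̃_n = (1 + q³ − (1+q²)·q^n)·q^{−2n−1/2} and λ̃_{n+1} = (1−q^n)²·q^{−4n}. Moreover, in this case b̃_{k,n} = (−1)^{n+k}·q^{−n/2−1/4}·[n choose k]_q·(q^{k²+k/2}/(q;q)_{k+1})·[1 − q^{k+1} − (1−q^k)(1−q^{n+1})]. -/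

import Mathlib

/-- Finite q-shifted factorial `(z;q)_n`. -/
noncomputable def qp (z q : ℝ) (n : ℕ) : ℝ := ∏ k ∈ Finset.range n, (1 - z * q ^ k)

/-- Infinite q-shifted factorial `(z;q)_∞`. -/
noncomputable def qpInf (z q : ℝ) : ℝ := ∏' k : ℕ, (1 - z * q ^ k)

/-- Gaussian q-binomial coefficient. -/
noncomputable def qbinom (q : ℝ) (n k : ℕ) : ℝ := qp q q n / (qp q q k * qp q q (n - k))

/-- `Δ_n = (pq^n;q)_∞ − (q^n;q)_∞`. -/
noncomputable def Δ (p q : ℝ) (n : ℕ) : ℝ := qpInf (p * q ^ n) q - qpInf (q ^ n) q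

/-- The normalizing constant `C̃_n`. -/
noncomputable def Ct (p q : ℝ) (n : ℕ) : ℝ :=
  (-1) ^ n * q ^ ((n : ℝ) / 2 + 1 / 4) * Real.sqrt (qp p q (n + 1) / qp q q n) *
    qpInf (p * q ^ (n + 1)) q / Real.sqrt (Δ p q n * Δ p q (n + 1))

/-- Coefficients `b̃_{k,n}` of the modified generalized Stieltjes–Wigert
orthonormal polynomials. -/
noncomputable def bt (p q : ℝ) (k n : ℕ) : ℝ :=
  Ct p q n * (-1) ^ k * qbinom q n k * (q ^ ((k : ℝ) ^ 2 + (k : ℝ) / 2) / qp p q k) *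
    (1 - (1 - q ^ k) / (1 - p * q ^ k) * (qpInf (q ^ (n + 1)) q / qpInf (p * q ^ (n + 1)) q))

section
variable {q : ℝ} (hq0 : 0 < q) (hq1 : q < 1)
include hq0 hq1

lemma mypow_le_one (k : ℕ) : q ^ k ≤ 1 := pow_le_one₀ hq0.le hq1.le

lemma mypow_lt_one (k : ℕ) (hk : 1 ≤ k) : q ^ k < 1 := pow_lt_one₀ hq0.le hq1 (by omega)

lemma one_sub_pow_pos (k : ℕ) (hk : 1 ≤ k) : 0 < 1 - q ^ k := by
  have := mypow_lt_one hq0 hq1 k hk; linarith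

lemma factor_pos (m k : ℕ) (hm : 1 ≤ m) : 0 < 1 - q ^ m * q ^ k := by
  have h1 : q ^ m ≤ q := by
    calc q ^ m ≤ q ^ 1 := pow_le_pow_of_le_one hq0.le hq1.le hm
    _ = q := pow_one q
  have h2 : q ^ k ≤ 1 := mypow_le_one hq0 hq1 k
  have h3 : q ^ m * q ^ k ≤ q * 1 := mul_le_mul h1 h2 (by positivity) hq0.le
  nlinarith

lemma sumlog (m : ℕ) (hm : 1 ≤ m) :
    Summable fun k : ℕ => Real.log (1 - q ^ m * q ^ k) := by
  rw [← summable_neg_iff]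
  refine Summable.of_nonneg_of_le ?_ ?_
    ((summable_geometric_of_lt_one hq0.le hq1).mul_left (1 - q)⁻¹)
  · intro k
    rw [neg_nonneg]
    apply Real.log_nonpos
    · exact (factor_pos hq0 hq1 m k hm).le
    · nlinarith [pow_pos hq0 m, pow_pos hq0 k]
  · intro k
    have hx : 0 < 1 - q ^ m * q ^ k := factor_pos hq0 hq1 m k hm
    rw [← Real.log_inv]
    refine le_trans (Real.log_le_sub_one_of_pos (by positivity)) ?_
    rw [inv_eq_one_div, div_sub' hx.ne']
    rw [div_le_iff₀ hx]
    have h1 : q ^ m * q ^ k ≤ q * q ^ k := by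
      apply mul_le_mul_of_nonneg_right _ (by positivity)
      calc q ^ m ≤ q ^ 1 := pow_le_pow_of_le_one hq0.le hq1.le hm
      _ = q := pow_one q
    have hq' : (0:ℝ) < 1 - q := by linarith
    have h3 : (1-q)⁻¹ * q ^ k * (1 - q ^ m * q ^ k) = (q ^ k * (1 - q ^ m * q ^ k))/(1-q) := by
      field_simp
    rw [h3, le_div_iff₀ hq']
    have hk1 : q ^ k ≤ 1 := mypow_le_one hq0 hq1 k
    nlinarith [mul_le_mul_of_nonneg_right h1 hq'.le,
      mul_le_mul_of_nonneg_left h1 (pow_nonneg hq0.le k),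
      mul_le_mul_of_nonneg_left hk1 (mul_nonneg hq0.le (pow_nonneg hq0.le k)),
      mul_nonneg (pow_nonneg hq0.le k) (sq_nonneg (1-q))]

lemma qpInf_pos (m : ℕ) (hm : 1 ≤ m) : 0 < qpInf (q ^ m) q := by
  have h := Real.rexp_tsum_eq_tprod (f := fun k => 1 - q ^ m * q ^ k)
    (fun k => factor_pos hq0 hq1 m k hm) (sumlog hq0 hq1 m hm)
  have h2 := h
  rw [qpInf, ← h2]
  exact Real.exp_pos _

lemma qpInf_mult (m : ℕ) (hm : 1 ≤ m) : Multipliable fun k : ℕ => 1 - q ^ m * q ^ k :=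
  Real.multipliable_of_summable_log (f := fun k => 1 - q ^ m * q ^ k)
    (fun k => factor_pos hq0 hq1 m k hm) (sumlog hq0 hq1 m hm)

lemma qpInf_succ (m : ℕ) (hm : 1 ≤ m) :
    qpInf (q ^ m) q = (1 - q ^ m) * qpInf (q ^ (m+1)) q := by
  have h1 : (1 - q ^ m * q ^ (0:ℕ)) = 1 - q ^ m := by simp
  have h2 : ∀ k : ℕ, (1 : ℝ) - q ^ m * q ^ (k + 1) = 1 - q ^ (m + 1) * q ^ k := fun k => by ring
  have hmul : Multipliable fun k : ℕ => 1 - q ^ m * q ^ (k + 1) := by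
    have := qpInf_mult hq0 hq1 (m+1) (by omega)
    exact this.congr fun k => (h2 k).symm
  have key := tprod_eq_zero_mul' (f := fun k : ℕ => 1 - q ^ m * q ^ k) hmul
  rw [qpInf, qpInf, key]
  rw [h1, tprod_congr h2]

omit hq0 hq1 in
lemma qpInf_one_eq_zero : qpInf 1 q = 0 := by
  have h : HasProd (fun k : ℕ => 1 - 1 * q ^ k) 0 := by
    rw [HasProd]
    have he : ∀ᶠ s : Finset ℕ in Filter.atTop, ∏ i ∈ s, (1 - 1 * q ^ i) = 0 := by
      filter_upwards [Filter.eventually_ge_atTop ({0} : Finset ℕ)] with s hs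
      exact Finset.prod_eq_zero (hs (Finset.mem_singleton_self 0)) (by simp)
    exact Filter.Tendsto.congr' (Filter.EventuallyEq.symm he) tendsto_const_nhds
  exact h.tprod_eq

lemma qp_pos (n : ℕ) : 0 < qp q q n := by
  rw [qp]
  apply Finset.prod_pos
  intro k _
  have := factor_pos hq0 hq1 1 k le_rfl
  rw [pow_one] at this
  exact this

omit hq0 hq1 in
lemma qp_succ (n : ℕ) : qp q q (n+1) = qp q q n * (1 - q ^ (n+1)) := by
  rw [qp, qp, Finset.prod_range_succ]
  ring

lemma Δ_eq (n : ℕ) : Δ q q n = q ^ n * qpInf (q ^ (n+1)) q := by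
  rw [Δ, show q * q ^ n = q ^ (n+1) by ring]
  cases n with
  | zero => simp [pow_zero, qpInf_one_eq_zero]
  | succ m =>
      rw [qpInf_succ hq0 hq1 (m+1) (by omega)]
      ring

lemma Ct_eq (n : ℕ) : Ct q q n = (-1:ℝ) ^ n * q ^ (-(n:ℝ)/2 - 1/4) := by
  have hP : 0 < qpInf (q ^ (n+2)) q := qpInf_pos hq0 hq1 (n+2) (by omega)
  have hqp : (0:ℝ) < qp q q n := qp_pos hq0 hq1 n
  have h1 : qp q q (n+1) / qp q q n = 1 - q ^ (n+1) := by
    rw [qp_succ n]; field_simp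
  have hb : 0 < 1 - q ^ (n+1) := one_sub_pow_pos hq0 hq1 (n+1) (by omega)
  have h2 : Δ q q n * Δ q q (n+1) = (q ^ n * q ^ (n+1) * (1 - q ^ (n+1))) * (qpInf (q ^ (n+2)) q)^2 := by
    rw [Δ_eq hq0 hq1 n, Δ_eq hq0 hq1 (n+1), qpInf_succ hq0 hq1 (n+1) (by omega)]
    ring
  rw [Ct, h2, h1, show q * q ^ (n+1) = q ^ (n+2) by ring]
  have hs : Real.sqrt ((q ^ n * q ^ (n+1) * (1 - q ^ (n+1))) * (qpInf (q ^ (n+2)) q)^2)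
      = (Real.sqrt (q ^ n * q ^ (n+1)) * Real.sqrt (1 - q ^ (n+1))) * qpInf (q ^ (n+2)) q := by
    rw [Real.sqrt_mul (by positivity), Real.sqrt_mul (by positivity), Real.sqrt_sq hP.le]
  rw [hs]
  have h3 : Real.sqrt (q ^ n * q ^ (n+1)) = q ^ ((n:ℝ) + 1/2) := by
    rw [show q ^ n * q ^ (n+1) = q ^ (2*n+1) by ring, Real.sqrt_eq_rpow,
      ← Real.rpow_natCast q (2*n+1), ← Real.rpow_mul hq0.le]
    push_cast
    ring_nf
  rw [h3]
  have hsq : Real.sqrt (1 - q ^ (n+1)) ≠ 0 := by positivity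
  have hPne : qpInf (q ^ (n+2)) q ≠ 0 := hP.ne'
  have hr1 : q ^ ((n:ℝ) + 1/2) ≠ 0 := (Real.rpow_pos_of_pos hq0 _).ne'
  have hr2 : q ^ ((n:ℝ)/2 + 1/4) = q ^ ((n:ℝ) + 1/2) * q ^ (-(n:ℝ)/2 - 1/4) := by
    rw [← Real.rpow_add hq0]; ring_nf
  rw [hr2]
  field_simp

lemma bt_eq (k n : ℕ) :
    bt q q k n = (-1) ^ (n + k) * q ^ (-(n : ℝ) / 2 - 1 / 4) * qbinom q n k *
      (q ^ ((k : ℝ) ^ 2 + (k : ℝ) / 2) / qp q q (k + 1)) *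
      (1 - q ^ (k + 1) - (1 - q ^ k) * (1 - q ^ (n + 1))) := by
  have hP : 0 < qpInf (q ^ (n+2)) q := qpInf_pos hq0 hq1 (n+2) (by omega)
  have hr : qpInf (q ^ (n+1)) q / qpInf (q * q ^ (n+1)) q = 1 - q ^ (n+1) := by
    rw [show q * q ^ (n+1) = q ^ (n+2) by ring, qpInf_succ hq0 hq1 (n+1) (by omega)]
    field_simp
  rw [bt, Ct_eq hq0 hq1 n, hr, show ((-1:ℝ))^(n+k) = (-1)^n * (-1)^k from pow_add _ _ _]
  have hk1 : (1:ℝ) - q * q ^ k ≠ 0 := by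
    have := factor_pos hq0 hq1 1 k le_rfl
    rw [pow_one] at this; exact this.ne'
  have hqpk : qp q q k ≠ 0 := (qp_pos hq0 hq1 k).ne'
  rw [qp_succ k, show (1:ℝ) - q ^ (k+1) = 1 - q * q ^ k by ring]
  field_simp
  ring_nf
  field_simp
  ring

lemma btnn (n : ℕ) :
    bt q q n n = q ^ ((n:ℝ)^2 - 1/4) * (q ^ n * (1 - q ^ (n+1)) / qp q q (n+1)) := by
  rw [bt_eq hq0 hq1 n n]
  have hb : qbinom q n n = 1 := by
    have h0 : qp q q 0 = 1 := by rw [qp]; simp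
    rw [qbinom, Nat.sub_self, h0]
    field_simp [(qp_pos hq0 hq1 n).ne']
  have hpow : (-1:ℝ)^(n+n) = 1 := by
    rw [← two_mul, pow_mul]; norm_num
  have hexp : q ^ (-(n:ℝ)/2 - 1/4) * q ^ ((n:ℝ)^2 + (n:ℝ)/2) = q ^ ((n:ℝ)^2 - 1/4) := by
    rw [← Real.rpow_add hq0]; ring_nf
  rw [hb, hpow, show (1:ℝ) - q ^ (n+1) - (1 - q ^ n) * (1 - q ^ (n+1))
      = q ^ n * (1 - q ^ (n+1)) by ring, ← hexp]
  ring

lemma ratio1 (m : ℕ) :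
    bt q q m m / bt q q (m+1) (m+1) = (1 - q ^ (m+1)) * (q ^ (2*m+2))⁻¹ := by
  rw [btnn hq0 hq1 m, btnn hq0 hq1 (m+1)]
  have key : q ^ (((m+1:ℕ):ℝ)^2 - 1/4) = q ^ ((m:ℝ)^2 - 1/4) * q ^ (2*m+1) := by
    rw [show (((m+1:ℕ):ℝ))^2 - 1/4 = ((m:ℝ)^2 - 1/4) + ((2*m+1:ℕ):ℝ) by push_cast; ring,
      Real.rpow_add hq0, Real.rpow_natCast]
  rw [key, qp_succ (m+1)]
  have hX : q ^ ((m:ℝ)^2 - 1/4) ≠ 0 := (Real.rpow_pos_of_pos hq0 _).ne'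
  have hqp : qp q q (m+1) ≠ 0 := (qp_pos hq0 hq1 (m+1)).ne'
  have h1 : (1:ℝ) - q ^ (m+2) ≠ 0 := (one_sub_pow_pos hq0 hq1 (m+2) (by omega)).ne'
  have hq : q ≠ 0 := hq0.ne'
  field_simp
  ring

lemma btn1 (m : ℕ) :
    bt q q m (m+1) = -(q ^ ((m:ℝ)^2 - 3/4) * ((qp q q (m+1) / (qp q q m * qp q q 1)) *
      ((1 - q ^ (m+1) - (1 - q ^ m) * (1 - q ^ (m+2))) / qp q q (m+1)))) := by
  rw [bt_eq hq0 hq1 m (m+1)]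
  have hsign : (-1:ℝ) ^ (m + 1 + m) = -1 := by
    rw [show m + 1 + m = 2*m + 1 by ring, pow_succ, pow_mul]
    norm_num
  have hb : qbinom q (m+1) m = qp q q (m+1) / (qp q q m * qp q q 1) := by
    rw [qbinom, Nat.add_sub_cancel_left]
  have hexp : q ^ (-((m+1:ℕ):ℝ)/2 - 1/4) * q ^ ((m:ℝ)^2 + (m:ℝ)/2) = q ^ ((m:ℝ)^2 - 3/4) := by
    rw [← Real.rpow_add hq0]
    push_cast
    ring_nf
  rw [hsign, hb, ← hexp]
  ring

lemma ratio2 (m : ℕ) :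
    bt q q m (m+1) / bt q q (m+1) (m+1)
      = -((q ^ ((3:ℝ)/2))⁻¹ * ((1 - q ^ (m+1)) * (q ^ m * (1-q) + q ^ (m+2) * (1 - q ^ m)))
          / ((1-q) * q ^ (3*m+1))) := by
  rw [btn1 hq0 hq1 m, btnn hq0 hq1 (m+1)]
  have key : q ^ (((m+1:ℕ):ℝ)^2 - 1/4) = q ^ ((m:ℝ)^2 - 3/4) * q ^ ((3:ℝ)/2) * q ^ (2*m) := by
    rw [show (((m+1:ℕ):ℝ))^2 - 1/4 = (((m:ℝ)^2 - 3/4) + (3:ℝ)/2) + ((2*m:ℕ):ℝ)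
        by push_cast; ring, Real.rpow_add hq0, Real.rpow_add hq0, Real.rpow_natCast]
  rw [key]
  have hqp1 : qp q q (m+1) = qp q q m * (1 - q ^ (m+1)) := qp_succ m
  have hqp2 : qp q q (m+2) = qp q q (m+1) * (1 - q ^ (m+2)) := qp_succ (m+1)
  have hq1' : qp q q 1 = 1 - q := by
    rw [qp, Finset.prod_range_one, pow_zero, mul_one]
  have hX : q ^ ((m:ℝ)^2 - 3/4) ≠ 0 := (Real.rpow_pos_of_pos hq0 _).ne'
  have hY : q ^ ((3:ℝ)/2) ≠ 0 := (Real.rpow_pos_of_pos hq0 _).ne'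
  have hqpm : qp q q m ≠ 0 := (qp_pos hq0 hq1 m).ne'
  have h1 : (1:ℝ) - q ^ (m+1) ≠ 0 := (one_sub_pow_pos hq0 hq1 (m+1) (by omega)).ne'
  have h2 : (1:ℝ) - q ^ (m+2) ≠ 0 := (one_sub_pow_pos hq0 hq1 (m+2) (by omega)).ne'
  have h3 : (1:ℝ) - q ≠ 0 := by linarith
  have hq : q ≠ 0 := hq0.ne'
  rw [hqp2, hqp1, hq1']
  field_simp
  ring

end

theorem stmt_13 (p q : ℝ) (hq0 : 0 < q) (hq1 : q < 1) (hpq : p = q) :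
    (∀ n k : ℕ, k ≤ n →
      bt p q k n = (-1) ^ (n + k) * q ^ (-(n : ℝ) / 2 - 1 / 4) * qbinom q n k *
        (q ^ ((k : ℝ) ^ 2 + (k : ℝ) / 2) / qp q q (k + 1)) *
        (1 - q ^ (k + 1) - (1 - q ^ k) * (1 - q ^ (n + 1)))) ∧
    (-(bt p q 0 1) / bt p q 1 1
        = (1 + q ^ 3 - (1 + q ^ 2) * q ^ 1) * q ^ (-2 * (1 : ℝ) - 1 / 2)) ∧
    (∀ n : ℕ, 1 ≤ n →
      bt p q (n - 1) n / bt p q n n - bt p q n (n + 1) / bt p q (n + 1) (n + 1)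
        = (1 + q ^ 3 - (1 + q ^ 2) * q ^ (n + 1)) * q ^ (-2 * ((n : ℝ) + 1) - 1 / 2)) ∧
    (∀ n : ℕ, 1 ≤ n →
      (bt p q (n - 1) (n - 1) / bt p q n n) ^ 2
        = (1 - q ^ n) ^ 2 * q ^ (-(4 : ℝ) * (n : ℝ))) := by
  subst p
  have hY : q ^ ((3:ℝ)/2) ≠ 0 := (Real.rpow_pos_of_pos hq0 _).ne'
  have hq : q ≠ 0 := hq0.ne'
  have h1q : (1:ℝ) - q ≠ 0 := by linarith
  refine ⟨fun n k _ => bt_eq hq0 hq1 k n, ?_, ?_, ?_⟩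
  · rw [neg_div, ratio2 hq0 hq1 0]
    have e : q ^ (-2*(1:ℝ) - 1/2) = (q ^ ((3:ℝ)/2))⁻¹ * q⁻¹ := by
      rw [show (-2*(1:ℝ)-1/2) = -((3:ℝ)/2 + 1) by norm_num, Real.rpow_neg hq0.le,
        Real.rpow_add hq0, Real.rpow_one, mul_inv]
    rw [e]
    field_simp
    ring
  · intro n hn
    obtain ⟨m, rfl⟩ : ∃ m, n = m + 1 := ⟨n - 1, by omega⟩
    simp only [Nat.add_sub_cancel]
    rw [ratio2 hq0 hq1 m, ratio2 hq0 hq1 (m+1)]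
    have e : q ^ (-2*((((m+1:ℕ)):ℝ)+1) - 1/2) = (q ^ ((3:ℝ)/2))⁻¹ * (q ^ (2*m+3))⁻¹ := by
      rw [show -2*((((m+1:ℕ)):ℝ)+1) - 1/2 = -((3:ℝ)/2 + ((2*m+3:ℕ):ℝ)) by push_cast; ring,
        Real.rpow_neg hq0.le, Real.rpow_add hq0, Real.rpow_natCast, mul_inv]
    rw [e]
    field_simp
    ring
  · intro n hn
    obtain ⟨m, rfl⟩ : ∃ m, n = m + 1 := ⟨n - 1, by omega⟩
    simp only [Nat.add_sub_cancel]
    rw [ratio1 hq0 hq1 m]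
    have e : q ^ (-(4:ℝ) * (((m+1:ℕ)):ℝ)) = ((q ^ (2*m+2))⁻¹)^2 := by
      rw [show -(4:ℝ)*(((m+1:ℕ)):ℝ) = -(((4*m+4:ℕ)):ℝ) by push_cast; ring,
        Real.rpow_neg hq0.le, Real.rpow_natCast, ← inv_pow,
        show 4*m+4 = (2*m+2)*2 by ring, pow_mul, inv_pow]
    rw [mul_pow, e]
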